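/- Let G = (V, E) be a strongly connected finite directed graph with |V| ≥ 2. Then there exists a probability distribution over the simple directed cycles of G such that for every vertex j and every pair of edges (i₁, j), (i₂, j) ∈ E, the total probability of cycles containing the edge (i₁, j) equals the total probability of cycles containing the edge (i₂, j), and moreover every edge of G is contained in some cycle of positive probability. -/

import Mathlib

open scoped Classical

/-- `c` is a simple directed cycle in the directed graph with edge relation `E`:
a nonempty duplicate-free list of vertices with an edge from each vertex to the
cyclically next one. -/
def IsSimpleCycle {V : Type*} (E : V → V → Prop) (c : List V) : Prop :=
  c ≠ [] ∧ c.Nodup ∧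
    ∀ i : Fin c.length, E (c.get i) (c.get ⟨(i.val + 1) % c.length, Nat.mod_lt _ i.pos⟩)

/-- The directed edge `(a, b)` is contained in the cycle given by the list `c`. -/
def EdgeInCycle {V : Type*} (c : List V) (a b : V) : Prop :=
  ∃ i : Fin c.length,
    c.get i = a ∧ c.get ⟨(i.val + 1) % c.length, Nat.mod_lt _ i.pos⟩ = b

section Cyc
variable {V : Type*}

/-- successor index in a cycle -/
def cnext (c : List V) (i : Fin c.length) : Fin c.length :=
  ⟨(i.val + 1) % c.length, Nat.mod_lt _ i.pos⟩

lemma mod_succ_eq {n x : ℕ} (hx : x < n) : (x + 1) % n = if x + 1 = n then 0 else x + 1 := by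
  split
  · simp [*]
  · exact Nat.mod_eq_of_lt (by omega)

lemma cnext_inj (c : List V) : Function.Injective (cnext c) := by
  intro i j h
  have h' := congrArg Fin.val h
  simp only [cnext] at h'
  rw [mod_succ_eq i.isLt, mod_succ_eq j.isLt] at h'
  have hi := i.isLt; have hj := j.isLt
  apply Fin.ext
  split at h' <;> split at h' <;> omega

lemma cnext_bij (c : List V) : Function.Bijective (cnext c) :=
  Finite.injective_iff_bijective.1 (cnext_inj c)

lemma isSimpleCycle_singleton (E' : V → V → Prop) (v : V) (h : E' v v) :
    IsSimpleCycle E' [v] := by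
  refine ⟨by simp, by simp, ?_⟩
  intro i
  have : i = ⟨0, by simp⟩ := by
    apply Fin.ext
    have := i.isLt
    simp only [List.length_singleton] at this
    simpa using Nat.lt_one_iff.mp this
  subst this
  simpa using h

lemma isSimpleCycle_of_chain (E' : V → V → Prop) (v : V) (t : List V)
    (hnd : (v :: t).Nodup) (hch : List.Chain' E' (v :: t))
    (hclose : E' ((v :: t).getLast (List.cons_ne_nil v t)) v) :
    IsSimpleCycle E' (v :: t) := by
  refine ⟨List.cons_ne_nil v t, hnd, ?_⟩
  intro i
  have hi := i.isLt
  rcases Nat.lt_or_ge (i.val + 1) (v :: t).length with h1 | h1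
  · have h1' : i.val < t.length := by
      simp only [List.length_cons] at h1; omega
    have := List.isChain_iff_getElem.1 hch i.val (by simpa using h1')
    have e : (⟨(i.val + 1) % (v :: t).length, Nat.mod_lt _ i.pos⟩ : Fin (v :: t).length)
        = ⟨i.val + 1, h1⟩ := by
      exact Fin.ext (Nat.mod_eq_of_lt h1)
    rw [e]
    exact this
  · have he : i.val + 1 = (v :: t).length := by omega
    have e0 : (⟨(i.val + 1) % (v :: t).length, Nat.mod_lt _ i.pos⟩ : Fin (v :: t).length)
        = ⟨0, by simp⟩ := by
      have hv : (i.val + 1) % (v :: t).length = 0 := by rw [he, Nat.mod_self]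
      exact Fin.ext hv
    have eL : (v :: t).get i = (v :: t).getLast (List.cons_ne_nil v t) := by
      rw [List.getLast_eq_getElem]
      simp only [List.get_eq_getElem]
      congr 1
      omega
    rw [e0, eL]
    simpa using hclose
end Cyc

section Ext
variable {V : Type*} [Fintype V]

lemma close_cycle (E' : V → V → Prop) (v w : V) (t : List V)
    (hmem : w ∈ v :: t) (hnd : (v :: t).Nodup)
    (hch : List.Chain' (fun a b => E' b a) (v :: t)) (hw : E' v w) :
    ∃ c, IsSimpleCycle E' c := by
  obtain ⟨p, q, hsplit⟩ := List.append_of_mem hmem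
  rcases p with _ | ⟨v', p'⟩
  · simp only [List.nil_append] at hsplit
    obtain ⟨hv, -⟩ := List.cons_eq_cons.mp hsplit
    exact ⟨[v], isSimpleCycle_singleton E' v (by rw [← hv] at hw; exact hw)⟩
  · rw [List.cons_append] at hsplit
    obtain ⟨hv, ht⟩ := List.cons_eq_cons.mp hsplit
    subst hv
    have hsub : ((v :: p') ++ [w]).Sublist (v :: t) := by
      rw [ht]
      exact (((List.sublist_append_left [w] q).trans (by simp)).append_left p').cons₂ v
    have hnd' : (((v :: p') ++ [w]).reverse).Nodup :=
      List.nodup_reverse.2 (hsub.nodup hnd)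
    have hch' : List.Chain' E' (((v :: p') ++ [w]).reverse) := by
      show List.IsChain E' _
      rw [List.isChain_reverse]
      exact List.IsChain.prefix hch ⟨q, by rw [ht]; simp⟩
    have hrev : ((v :: p') ++ [w]).reverse = w :: ((v :: p').reverse) := by simp
    rw [hrev] at hnd' hch'
    refine ⟨w :: (v :: p').reverse, isSimpleCycle_of_chain E' w ((v :: p').reverse) hnd' hch' ?_⟩
    have h1 : (w :: (v :: p').reverse).getLast (List.cons_ne_nil _ _)
        = ((v :: p').reverse).getLast (by simp) := List.getLast_cons (by simp)
    have h2 : ((v :: p').reverse).getLast (by simp) = v := by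
      rw [List.getLast_reverse]
      simp
    rw [h1, h2]
    exact hw

lemma extend_path (E' : V → V → Prop)
    (hext : ∀ x, (∃ u, E' u x) → ∃ w, E' x w) :
    ∀ (n : ℕ) (v : V) (t : List V), Fintype.card V ≤ (v :: t).length + n →
      (v :: t).Nodup → List.Chain' (fun a b => E' b a) (v :: t) →
      (∃ u, E' u v) → ∃ c, IsSimpleCycle E' c := by
  intro n
  induction n with
  | zero =>
    intro v t hlen hnd hch hin
    obtain ⟨w, hw⟩ := hext v hin
    have hmem : w ∈ v :: t := by
      by_contra hmem
      have h1 : ((w :: v :: t)).Nodup := List.nodup_cons.2 ⟨hmem, hnd⟩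
      have h2 := h1.length_le_card
      simp only [List.length_cons] at h2 hlen
      omega
    exact close_cycle E' v w t hmem hnd hch hw
  | succ n ih =>
    intro v t hlen hnd hch hin
    obtain ⟨w, hw⟩ := hext v hin
    by_cases hmem : w ∈ v :: t
    · exact close_cycle E' v w t hmem hnd hch hw
    · refine ih w (v :: t) ?_ (List.nodup_cons.2 ⟨hmem, hnd⟩) (List.isChain_cons_cons.2 ⟨hw, hch⟩) ⟨v, hw⟩
      simp only [List.length_cons] at hlen ⊢
      omega

lemma exists_cycle (E' : V → V → Prop)
    (hext : ∀ x, (∃ u, E' u x) → ∃ w, E' x w)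
    (a b : V) (hab : E' a b) : ∃ c, IsSimpleCycle E' c := by
  by_cases h : a = b
  · exact ⟨[a], isSimpleCycle_singleton E' a (by rw [h] at hab ⊢; exact hab)⟩
  · refine extend_path E' hext (Fintype.card V) b [a] (by simp only [List.length_cons, List.length_nil]; omega) ?_ ?_ ⟨a, hab⟩
    · simp [Ne.symm h]
    · exact List.isChain_cons_cons.2 ⟨hab, List.IsChain.singleton a⟩
end Ext

section Deg
variable {V : Type*} [Fintype V]

lemma edgeInCycle_iff_out {E' : V → V → Prop} {c : List V} (h : IsSimpleCycle E' c)
    {v : V} {k : Fin c.length} (hk : c.get k = v) (b : V) :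
    EdgeInCycle c v b ↔ b = c.get (cnext c k) := by
  constructor
  · rintro ⟨i, h1, h2⟩
    have hik : i = k := List.nodup_iff_injective_get.mp h.2.1 (h1.trans hk.symm)
    subst hik
    exact h2.symm
  · rintro rfl
    exact ⟨k, hk, rfl⟩

lemma edgeInCycle_iff_in {E' : V → V → Prop} {c : List V} (h : IsSimpleCycle E' c)
    {v : V} {k j : Fin c.length} (hk : c.get k = v) (hj : cnext c j = k) (a : V) :
    EdgeInCycle c a v ↔ a = c.get j := by
  constructor
  · rintro ⟨i, h1, h2⟩
    have : cnext c i = k := List.nodup_iff_injective_get.mp h.2.1 (h2.trans hk.symm)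
    have hij : i = j := cnext_inj c (this.trans hj.symm)
    subst hij
    exact h1.symm
  · rintro rfl
    refine ⟨j, rfl, ?_⟩
    subst hj
    exact hk

lemma cycle_out_deg {E' : V → V → Prop} {c : List V} (h : IsSimpleCycle E' c) (v : V) :
    (∑ b : V, if EdgeInCycle c v b then 1 else 0) = if v ∈ c then 1 else 0 := by
  by_cases hv : v ∈ c
  · obtain ⟨k, hk⟩ := List.mem_iff_get.mp hv
    have e : ∀ b, (if EdgeInCycle c v b then (1 : ℕ) else 0)
        = if b = c.get (cnext c k) then 1 else 0 := fun b => by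
      simp only [edgeInCycle_iff_out h hk b]
    rw [if_pos hv]
    simp only [e]
    simp
  · rw [if_neg hv]
    apply Finset.sum_eq_zero
    intro b _
    rw [if_neg]
    rintro ⟨i, h1, h2⟩
    exact hv (h1 ▸ List.get_mem c i)

lemma cycle_in_deg {E' : V → V → Prop} {c : List V} (h : IsSimpleCycle E' c) (v : V) :
    (∑ a : V, if EdgeInCycle c a v then 1 else 0) = if v ∈ c then 1 else 0 := by
  by_cases hv : v ∈ c
  · obtain ⟨k, hk⟩ := List.mem_iff_get.mp hv
    obtain ⟨j, hj⟩ := (cnext_bij c).surjective k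
    have e : ∀ a, (if EdgeInCycle c a v then (1 : ℕ) else 0)
        = if a = c.get j then 1 else 0 := fun a => by
      simp only [edgeInCycle_iff_in h hk hj a]
    rw [if_pos hv]
    simp only [e]
    simp
  · rw [if_neg hv]
    apply Finset.sum_eq_zero
    intro a _
    rw [if_neg]
    rintro ⟨i, h1, h2⟩
    exact hv (h2 ▸ List.get_mem c _)
end Deg

section Decomp
variable {V : Type*} [Fintype V]

lemma decomp (E : V → V → Prop) :
    ∀ (N : ℕ) (F : V → V → ℕ), (∑ q : V × V, F q.1 q.2) ≤ N →
      (∀ a b, 0 < F a b → E a b) → (∀ v, ∑ a, F a v = ∑ b, F v b) →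
      ∃ cs : List (List V), (∀ c ∈ cs, IsSimpleCycle E c) ∧
        ∀ a b, ((cs.map fun c => if EdgeInCycle c a b then 1 else 0).sum) = F a b := by
  intro N
  induction N with
  | zero =>
    intro F hN _ _
    refine ⟨[], by simp, fun a b => ?_⟩
    have : F a b = 0 := by
      have h := Finset.single_le_sum (f := fun q : V × V => F q.1 q.2)
        (fun q _ => Nat.zero_le _) (Finset.mem_univ (a, b))
      simp only [] at h
      omega
    simp [this]
  | succ N ih =>
    intro F hN hsupp hcons
    by_cases hz : ∀ a b, F a b = 0
    · exact ⟨[], by simp, fun a b => by simp [hz]⟩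
    push_neg at hz
    obtain ⟨a, b, hab⟩ := hz
    have hab' : 0 < F a b := Nat.pos_of_ne_zero hab
    set E' : V → V → Prop := fun x y => 0 < F x y with hE'
    have hext : ∀ x, (∃ u, E' u x) → ∃ w, E' x w := by
      rintro x ⟨u, hu⟩
      by_contra hw
      push_neg at hw
      have h1 : 0 < ∑ a, F a x :=
        Finset.sum_pos' (fun i _ => Nat.zero_le _) ⟨u, Finset.mem_univ u, hu⟩
      have h2 : ∑ b, F x b = 0 := Finset.sum_eq_zero fun w _ => Nat.eq_zero_of_not_pos (hw w)
      rw [hcons x] at h1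
      omega
    obtain ⟨c, hc⟩ := exists_cycle E' hext a b hab'
    have hcE : IsSimpleCycle E c :=
      ⟨hc.1, hc.2.1, fun i => hsupp _ _ (hc.2.2 i)⟩
    have hedge : ∀ x y, EdgeInCycle c x y → 0 < F x y := by
      rintro x y ⟨i, h1, h2⟩
      exact h1 ▸ h2 ▸ hc.2.2 i
    have hle : ∀ x y, (if EdgeInCycle c x y then 1 else 0) ≤ F x y := by
      intro x y
      split
      · exact hedge x y ‹_›
      · exact Nat.zero_le _
    set F' : V → V → ℕ := fun x y => F x y - (if EdgeInCycle c x y then 1 else 0) with hF'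
    have hsupp' : ∀ x y, 0 < F' x y → E x y := fun x y h =>
      hsupp x y (lt_of_lt_of_le h (Nat.sub_le _ _))
    have hcons' : ∀ v, ∑ x, F' x v = ∑ y, F' v y := by
      intro v
      rw [Finset.sum_tsub_distrib _ (fun x _ => hle x v),
        Finset.sum_tsub_distrib _ (fun y _ => hle v y),
        hcons v, cycle_in_deg hc v, cycle_out_deg hc v]
    -- the total decreases
    have hlt : (∑ q : V × V, F' q.1 q.2) < ∑ q : V × V, F q.1 q.2 := by
      apply Finset.sum_lt_sum (fun q _ => Nat.sub_le _ _)
      have hpos : 0 < c.length := List.length_pos_iff_ne_nil.mpr hc.1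
      set i0 : Fin c.length := ⟨0, hpos⟩
      refine ⟨(c.get i0, c.get (cnext c i0)), Finset.mem_univ _, ?_⟩
      have he : EdgeInCycle c (c.get i0) (c.get (cnext c i0)) := ⟨i0, rfl, rfl⟩
      have := hedge _ _ he
      simp only [hF', if_pos he]
      omega
    obtain ⟨cs, hcs1, hcs2⟩ := ih F' (by omega) hsupp' hcons'
    refine ⟨c :: cs, ?_, fun x y => ?_⟩
    · intro c' hc'
      rcases List.mem_cons.mp hc' with rfl | h
      · exact hcE
      · exact hcs1 c' h
    · simp only [List.map_cons, List.sum_cons, hcs2 x y, hF']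
      have := hle x y
      omega
end Decomp

section Stat
variable {V : Type*} [Fintype V]

lemma exists_pos_weights (E : V → V → Prop)
    (hconn : ∀ u v : V, Relation.ReflTransGen E u v)
    (hcard : 2 ≤ Fintype.card V) :
    ∃ m : V → ℕ, (∀ j, 0 < m j) ∧
      ∀ v, (Finset.univ.filter fun i => E i v).card * m v
          = ∑ k ∈ Finset.univ.filter fun k => E v k, m k := by
  classical
  have hne : Nonempty V := Fintype.card_pos_iff.mp (by omega)
  set indeg : V → ℕ := fun v => (Finset.univ.filter fun i => E i v).card with hindeg_def
  have hinedge : ∀ v, ∃ i, E i v := by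
    intro v
    obtain ⟨u, hu⟩ := Fintype.exists_ne_of_one_lt_card (by omega) v
    have h := hconn u v
    rcases Relation.ReflTransGen.cases_tail h with h' | ⟨i, _, hi⟩
    · exact absurd h'.symm (by exact hu)
    · exact ⟨i, hi⟩
  have hindeg : ∀ v, 0 < indeg v := by
    intro v
    obtain ⟨i, hi⟩ := hinedge v
    exact Finset.card_pos.2 ⟨i, Finset.mem_filter.2 ⟨Finset.mem_univ _, hi⟩⟩
  have hindegQ : ∀ v, ((indeg v : ℚ)) ≠ 0 := fun v => by
    exact_mod_cast (hindeg v).ne'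
  set P : Matrix V V ℚ := Matrix.of fun i j => if E j i then ((indeg i : ℚ))⁻¹ else 0 with hP
  have hPnn : ∀ i j, 0 ≤ P i j := by
    intro i j
    simp only [hP, Matrix.of_apply]
    split
    · positivity
    · exact le_refl 0
  have hProw : ∀ i, ∑ j, P i j = 1 := by
    intro i
    simp only [hP, Matrix.of_apply]
    rw [← Finset.sum_filter, Finset.sum_const, nsmul_eq_mul]
    exact mul_inv_cancel₀ (hindegQ i)
  set B : Matrix V V ℚ := Matrix.of fun i j => (if i = j then (1 : ℚ) else 0) - P i j with hB
  have h1 : B.mulVec (fun _ => (1 : ℚ)) = 0 := by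
    funext i
    simp only [Matrix.mulVec, dotProduct, Matrix.of_apply, mul_one, Pi.zero_apply, hB]
    rw [Finset.sum_sub_distrib, hProw i, Finset.sum_ite_eq Finset.univ i (fun _ => (1 : ℚ))]
    simp
  have hdet : B.det = 0 :=
    (Matrix.exists_mulVec_eq_zero_iff).1 ⟨fun _ => 1, by
      intro h
      have := congrFun h (Classical.arbitrary V)
      simpa using this, h1⟩
  have hdetT : B.transpose.det = 0 := by rw [Matrix.det_transpose]; exact hdet
  obtain ⟨π, hπ0, hπ⟩ := (Matrix.exists_mulVec_eq_zero_iff).2 hdetT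
  have hstat : ∀ j, ∑ i, π i * P i j = π j := by
    intro j
    have h2 := congrFun hπ j
    simp only [Matrix.mulVec, dotProduct, Matrix.transpose_apply, Matrix.of_apply,
      Pi.zero_apply, hB, sub_mul, ite_mul, one_mul, zero_mul] at h2
    rw [Finset.sum_sub_distrib, Finset.sum_ite_eq' Finset.univ j π] at h2
    simp only [Finset.mem_univ, if_true] at h2
    have : ∑ i, P i j * π i = π j := by linarith
    rw [← this]
    exact Finset.sum_congr rfl fun i _ => mul_comm _ _
  have key : ∀ (ρ : V → ℚ), (∀ j, ∑ i, ρ i * P i j = ρ j) →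
      ∀ j, ∑ i, max (ρ i) 0 * P i j = max (ρ j) 0 := by
    intro ρ hρ
    have hle : ∀ j, max (ρ j) 0 ≤ ∑ i, max (ρ i) 0 * P i j := by
      intro j
      refine max_le ?_ ?_
      · rw [← hρ j]
        exact Finset.sum_le_sum fun i _ =>
          mul_le_mul_of_nonneg_right (le_max_left _ _) (hPnn i j)
      · exact Finset.sum_nonneg fun i _ => mul_nonneg (le_max_right _ _) (hPnn i j)
    have hsum : ∑ j, ∑ i, max (ρ i) 0 * P i j = ∑ j, max (ρ j) 0 := by
      rw [Finset.sum_comm]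
      simp_rw [← Finset.mul_sum, hProw, mul_one]
    intro j
    by_contra hne'
    have hlt : max (ρ j) 0 < ∑ i, max (ρ i) 0 * P i j :=
      lt_of_le_of_ne (hle j) (Ne.symm hne')
    have : ∑ j', max (ρ j') 0 < ∑ j', ∑ i, max (ρ i) 0 * P i j' :=
      Finset.sum_lt_sum (fun i _ => hle i) ⟨j, Finset.mem_univ j, hlt⟩
    rw [hsum] at this
    exact lt_irrefl _ this
  obtain ⟨ν, hν_stat, hν_nn, hν_ne⟩ :
      ∃ ν : V → ℚ, (∀ j, ∑ i, ν i * P i j = ν j) ∧ (∀ i, 0 ≤ ν i) ∧ ν ≠ 0 := by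
    by_cases hμ : (fun i => max (π i) 0) = 0
    · refine ⟨fun i => max (-π i) 0, key _ ?_, fun i => le_max_right _ _, ?_⟩
      · intro j
        simp only [neg_mul]
        rw [Finset.sum_neg_distrib, hstat]
      · intro h
        apply hπ0
        funext i
        have h1 := congrFun hμ i
        have h2 := congrFun h i
        simp only [Pi.zero_apply] at h1 h2
        have := le_max_left (π i) 0
        have := le_max_left (-π i) 0
        simp only [h1] at *
        linarith [le_max_left (-π i) 0, congrFun h i]
    · exact ⟨fun i => max (π i) 0, key π hstat, fun i => le_max_right _ _, hμ⟩
  obtain ⟨i0, hi0⟩ : ∃ i0, 0 < ν i0 := by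
    by_contra h
    push_neg at h
    exact hν_ne (funext fun i => le_antisymm (h i) (hν_nn i))
  have hpos : ∀ j, 0 < ν j := by
    intro j
    refine Relation.ReflTransGen.head_induction_on (hconn j i0) hi0 ?_
    intro x c hxc _ hc
    have h1 : ν c * P c x ≤ ∑ i, ν i * P i x :=
      Finset.single_le_sum (fun i _ => mul_nonneg (hν_nn i) (hPnn i x)) (Finset.mem_univ c)
    have h2 : 0 < P c x := by
      simp only [hP, Matrix.of_apply, if_pos hxc]
      have h : (0 : ℚ) < (indeg c : ℚ) := by exact_mod_cast hindeg c
      positivity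
    rw [hν_stat x] at h1
    exact lt_of_lt_of_le (mul_pos hc h2) h1
  set g : V → ℚ := fun j => ν j * ((indeg j : ℚ))⁻¹ with hg
  have hgpos : ∀ j, 0 < g j := fun j => mul_pos (hpos j) (by
    have h : (0 : ℚ) < (indeg j : ℚ) := by exact_mod_cast hindeg j
    positivity)
  have hgcons : ∀ v, (indeg v : ℚ) * g v = ∑ k ∈ Finset.univ.filter fun k => E v k, g k := by
    intro v
    have hL : (indeg v : ℚ) * g v = ν v := by
      simp only [hg]
      rw [← mul_assoc, mul_comm ((indeg v : ℚ)) (ν v), mul_assoc,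
        mul_inv_cancel₀ (hindegQ v), mul_one]
    have hR : ∑ k ∈ Finset.univ.filter (fun k => E v k), g k = ν v := by
      rw [Finset.sum_filter]
      rw [← hν_stat v]
      refine Finset.sum_congr rfl fun k _ => ?_
      simp only [hP, Matrix.of_apply, hg, mul_ite, mul_zero]
    rw [hL, hR]
  -- scale to natural numbers
  set N : ℕ := ∏ j, (g j).den with hN
  have hNpos : 0 < N := Finset.prod_pos fun j _ => (g j).pos
  have hint : ∀ j, ∃ mj : ℕ, (mj : ℚ) = g j * N ∧ 0 < mj := by
    intro j
    obtain ⟨k, hk⟩ := Finset.dvd_prod_of_mem (fun j => (g j).den) (Finset.mem_univ j)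
    have hkpos : 0 < k := by
      rcases Nat.eq_zero_or_pos k with h | h
      · rw [h, mul_zero] at hk; omega
      · exact h
    have hnum : 0 < (g j).num := Rat.num_pos.2 (hgpos j)
    refine ⟨(g j).num.toNat * k, ?_, Nat.mul_pos (by omega) hkpos⟩
    have hcast : (((g j).num.toNat : ℕ) : ℚ) = ((g j).num : ℚ) := by
      exact_mod_cast congrArg (fun z : ℤ => (z : ℚ)) (Int.toNat_of_nonneg hnum.le)
    push_cast
    rw [hcast, hN, hk]
    push_cast
    rw [← mul_assoc]
    congr 1
    exact (Rat.mul_den_eq_num (g j)).symm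
  choose m hm hmpos using hint
  refine ⟨m, hmpos, fun v => ?_⟩
  have hq : ((indeg v * m v : ℕ) : ℚ) = ((∑ k ∈ Finset.univ.filter fun k => E v k, m k : ℕ) : ℚ) := by
    push_cast
    rw [hm v]
    rw [Finset.sum_congr rfl fun k _ => hm k]
    rw [← mul_assoc, hgcons v, Finset.sum_mul]
  exact Nat.cast_injective hq
end Stat

lemma fin_sum_list {α : Type*} (l : List α) (f : α → ℝ) :
    ∑ t : Fin l.length, f (l.get t) = (l.map f).sum := by
  induction l with
  | nil => simp
  | cons a l ih =>
    rw [List.map_cons, List.sum_cons, ← ih]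
    exact Fin.sum_univ_succ (f := fun t : Fin (l.length + 1) => f ((a :: l).get t))

lemma list_ite_sum {α : Type*} (P : α → Prop) (x : ℝ) (l : List α) :
    (l.map fun c => if P c then x else 0).sum
      = ((l.map fun c => if P c then (1 : ℕ) else 0).sum : ℝ) * x := by
  induction l with
  | nil => simp
  | cons a l ih => by_cases h : P a <;> simp [h, ih] <;> ring


/-- For a strongly connected finite directed graph with at least two vertices,
there is a probability distribution over its simple directed cycles such that
for every vertex `j` and any two edges `(i₁, j)` and `(i₂, j)`, the total
probability of cycles containing `(i₁, j)` equals that of cycles containing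
`(i₂, j)`; moreover every edge lies on some cycle of positive probability. -/
theorem stmt_5 {V : Type*} [Fintype V] (E : V → V → Prop)
    (hconn : ∀ u v : V, Relation.ReflTransGen E u v)
    (hcard : 2 ≤ Fintype.card V) :
    ∃ (r : ℕ) (c : Fin r → List V) (p : Fin r → ℝ),
      (∀ t, IsSimpleCycle E (c t)) ∧ (∀ t, 0 < p t) ∧ (∑ t, p t = 1) ∧
      (∀ j i₁ i₂ : V, E i₁ j → E i₂ j →
        (∑ t, if EdgeInCycle (c t) i₁ j then p t else 0) =
          (∑ t, if EdgeInCycle (c t) i₂ j then p t else 0)) ∧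
      (∀ a b : V, E a b → ∃ t, EdgeInCycle (c t) a b) := by
  classical
  obtain ⟨m, hmpos, hmcons⟩ := exists_pos_weights E hconn hcard
  set F : V → V → ℕ := fun a b => if E a b then m b else 0 with hF
  have hsupp : ∀ a b, 0 < F a b → E a b := by
    intro a b h
    by_contra he
    simp [hF, he] at h
  have hcons : ∀ v, ∑ a, F a v = ∑ b, F v b := by
    intro v
    have hL : ∑ a, F a v = (Finset.univ.filter fun i => E i v).card * m v := by
      simp only [hF]
      rw [← Finset.sum_filter, Finset.sum_const, smul_eq_mul]
    have hR : ∑ b, F v b = ∑ k ∈ Finset.univ.filter fun k => E v k, m k := by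
      simp only [hF]
      rw [← Finset.sum_filter]
    rw [hL, hR, hmcons v]
  obtain ⟨cs, hcs1, hcs2⟩ := decomp E _ F le_rfl hsupp hcons
  have hne : Nonempty V := Fintype.card_pos_iff.mp (by omega)
  obtain ⟨v0⟩ := hne
  obtain ⟨u0, hu0⟩ := Fintype.exists_ne_of_one_lt_card (by omega) v0
  have hinedge : ∃ i, E i v0 := by
    rcases Relation.ReflTransGen.cases_tail (hconn u0 v0) with h' | ⟨i, _, hi⟩
    · exact absurd h'.symm hu0
    · exact ⟨i, hi⟩
  obtain ⟨i0, hi0⟩ := hinedge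
  have hcpos : 0 < cs.length := by
    rcases cs with _ | ⟨c, cs'⟩
    · exfalso
      have h := hcs2 i0 v0
      simp only [List.map_nil, List.sum_nil, hF, if_pos hi0] at h
      exact (hmpos v0).ne' h.symm
    · simp
  have hlenR : (0 : ℝ) < (cs.length : ℝ) := by exact_mod_cast hcpos
  refine ⟨cs.length, fun t => cs.get t, fun _ => (cs.length : ℝ)⁻¹, ?_, ?_, ?_, ?_, ?_⟩
  · intro t
    exact hcs1 _ (List.get_mem cs t)
  · intro t
    positivity
  · rw [Finset.sum_const, Finset.card_univ, Fintype.card_fin, nsmul_eq_mul]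
    field_simp
  · intro j i₁ i₂ h1 h2
    have key : ∀ i, E i j →
        (∑ t : Fin cs.length, if EdgeInCycle (cs.get t) i j then (cs.length : ℝ)⁻¹ else 0)
          = (m j : ℝ) * (cs.length : ℝ)⁻¹ := by
      intro i hij
      rw [fin_sum_list cs (fun c => if EdgeInCycle c i j then (cs.length : ℝ)⁻¹ else 0),
        list_ite_sum (fun c => EdgeInCycle c i j) _ cs, hcs2 i j]
      simp [hF, hij]
    rw [key i₁ h1, key i₂ h2]
  · intro a b hab
    have h := hcs2 a b
    simp only [hF, if_pos hab] at h
    by_contra hno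
    push_neg at hno
    have hz : (cs.map fun c => if EdgeInCycle c a b then (1 : ℕ) else 0).sum = 0 := by
      apply List.sum_eq_zero
      intro x hx
      rw [List.mem_map] at hx
      obtain ⟨c', hc', rfl⟩ := hx
      obtain ⟨t, ht⟩ := List.mem_iff_get.mp hc'
      rw [if_neg (ht ▸ hno t)]
    rw [hz] at h
    exact (hmpos b).ne' h.symm
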